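/- Assume N ≥ 3. Then the set of points (X̄, Ȳ, Z̄) ∈ ℝ³ with X̄ ≥ 0, Z̄ ≥ 0 and X̄² + Ȳ² + Z̄² = 1 satisfying the system X̄Ȳ((N−2)X̄ + mȲ) = 0, X̄Z̄(σX̄ − (1−p)Ȳ) = 0, Z̄Ȳ((m+p−1)Ȳ + (σ+N−2)X̄) = 0 is exactly the five-element set {Q1, Q2, Q3, Q4, Q5}, where Q1 = (1,0,0), Q2 = (0,1,0), Q3 = (0,−1,0), Q4 = (0,0,1) and Q5 = (m/√((N−2)² + m²), −(N−2)/√((N−2)² + m²), 0). -/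
import Mathlib


open Real Filter Set Topology

noncomputable def alphaC (m p σ : ℝ) : ℝ := (σ + 2) / (σ * (m - 1) + 2 * (p - 1))

noncomputable def betaC (m p σ : ℝ) : ℝ := (m - p) / (σ * (m - 1) + 2 * (p - 1))

set_option maxHeartbeats 1000000 in
theorem critical_points_at_infinity (m p σ : ℝ) (N : ℕ)
    (hm : 1 < m) (hp0 : 0 < p) (hp1 : p < 1) (hσ : 0 < σ) (hN : 3 ≤ N) :
    ∀ X Y Z : ℝ, 0 ≤ X → 0 ≤ Z → X ^ 2 + Y ^ 2 + Z ^ 2 = 1 →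
      ((X * Y * (((N : ℝ) - 2) * X + m * Y) = 0 ∧
        X * Z * (σ * X - (1 - p) * Y) = 0 ∧
        Z * Y * ((m + p - 1) * Y + (σ + (N : ℝ) - 2) * X) = 0) ↔
      ((X, Y, Z) = ((1 : ℝ), (0 : ℝ), (0 : ℝ)) ∨
        (X, Y, Z) = ((0 : ℝ), (1 : ℝ), (0 : ℝ)) ∨
        (X, Y, Z) = ((0 : ℝ), (-1 : ℝ), (0 : ℝ)) ∨
        (X, Y, Z) = ((0 : ℝ), (0 : ℝ), (1 : ℝ)) ∨
        (X, Y, Z) = (m / Real.sqrt (((N : ℝ) - 2) ^ 2 + m ^ 2),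
          -((N : ℝ) - 2) / Real.sqrt (((N : ℝ) - 2) ^ 2 + m ^ 2), (0 : ℝ)))) := by
  intro X Y Z hX hZ hsum
  have hN' : (3 : ℝ) ≤ (N : ℝ) := by exact_mod_cast hN
  set s := Real.sqrt (((N : ℝ) - 2) ^ 2 + m ^ 2) with hs_def
  have hs2 : s ^ 2 = ((N : ℝ) - 2) ^ 2 + m ^ 2 := Real.sq_sqrt (by nlinarith)
  have hspos : 0 < s := Real.sqrt_pos.mpr (by nlinarith)
  constructor
  · rintro ⟨e1, e2, e3⟩
    rcases eq_or_lt_of_le hX with hX0 | hXpos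
    · -- X = 0
      have hX0 : X = 0 := hX0.symm
      subst hX0
      have h3 : Z * (Y ^ 2 * (m + p - 1)) = 0 := by nlinarith [e3]
      have hmp : (0 : ℝ) < m + p - 1 := by linarith
      have hZY : Z = 0 ∨ Y = 0 := by
        rcases mul_eq_zero.mp h3 with h | h
        · exact Or.inl h
        · rcases mul_eq_zero.mp h with h' | h'
          · exact Or.inr (pow_eq_zero_iff (n := 2) (by norm_num) |>.mp h')
          · linarith
      rcases hZY with hZ0 | hY0
      · subst hZ0
        have hY2 : (Y - 1) * (Y + 1) = 0 := by nlinarith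
        rcases mul_eq_zero.mp hY2 with h | h
        · have hY1 : Y = 1 := by linarith
          subst hY1; exact Or.inr (Or.inl rfl)
        · have hY1 : Y = -1 := by linarith
          subst hY1; exact Or.inr (Or.inr (Or.inl rfl))
      · subst hY0
        have hZ2 : (Z - 1) * (Z + 1) = 0 := by nlinarith
        rcases mul_eq_zero.mp hZ2 with h | h
        · have hZ1 : Z = 1 := by linarith
          subst hZ1; exact Or.inr (Or.inr (Or.inr (Or.inl rfl)))
        · have : Z = -1 := by linarith
          linarith
    · -- X > 0
      rcases eq_or_lt_of_le hZ with hZ0 | hZpos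
      · -- Z = 0
        have hZ0 : Z = 0 := hZ0.symm
        subst hZ0
        have h1 : Y * (((N : ℝ) - 2) * X + m * Y) = 0 := by
          rcases mul_eq_zero.mp e1 with h | h
          · rcases mul_eq_zero.mp h with h' | h'
            · exact absurd h' (ne_of_gt hXpos)
            · rw [h']; ring
          · rw [h]; ring
        rcases mul_eq_zero.mp h1 with hY0 | hrel
        · subst hY0
          have hX2 : (X - 1) * (X + 1) = 0 := by nlinarith
          rcases mul_eq_zero.mp hX2 with h | h
          · have hX1 : X = 1 := by linarith
            subst hX1; exact Or.inl rfl
          · nlinarith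
        · -- Q5
          have hm0 : m ≠ 0 := by linarith
          have hs0 : s ≠ 0 := ne_of_gt hspos
          have hkey : X ^ 2 * s ^ 2 = m ^ 2 := by
            have hY : m * Y = -(((N : ℝ) - 2) * X) := by linarith
            linear_combination X ^ 2 * hs2 + m ^ 2 * hsum + (((N : ℝ) - 2) * X - m * Y) * hY
          have hXs : X * s = m := by
            have h' : (X * s - m) * (X * s + m) = 0 := by nlinarith
            rcases mul_eq_zero.mp h' with h | h
            · linarith
            · nlinarith [mul_pos hXpos hspos]
          have hXval : X = m / s := by rw [eq_div_iff hs0]; exact hXs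
          have hYs : Y * s = -((N : ℝ) - 2) := by
            have hmY : m * Y = -(((N : ℝ) - 2) * X) := by linarith
            have hc : m * (Y * s) = m * (-((N : ℝ) - 2)) := by
              calc m * (Y * s) = (m * Y) * s := by ring
                _ = -(((N : ℝ) - 2) * X) * s := by rw [hmY]
                _ = -((N : ℝ) - 2) * (X * s) := by ring
                _ = -((N : ℝ) - 2) * m := by rw [hXs]
                _ = m * (-((N : ℝ) - 2)) := by ring
            exact mul_left_cancel₀ hm0 hc
          have hYval : Y = -((N : ℝ) - 2) / s := by rw [eq_div_iff hs0]; exact hYs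
          refine Or.inr (Or.inr (Or.inr (Or.inr ?_)))
          rw [hXval, hYval]
      · -- X > 0, Z > 0 : contradiction
        exfalso
        have h2 : σ * X - (1 - p) * Y = 0 := by
          rcases mul_eq_zero.mp e2 with h | h
          · rcases mul_eq_zero.mp h with h' | h'
            · exact absurd h' (ne_of_gt hXpos)
            · exact absurd h' (ne_of_gt hZpos)
          · exact h
        have hYpos : 0 < Y := by
          have h' : 0 < (1 - p) * Y := by nlinarith [mul_pos hσ hXpos]
          rcases mul_pos_iff.mp h' with ⟨_, h⟩ | ⟨h, _⟩
          · exact h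
          · linarith
        have hin : 0 < ((N : ℝ) - 2) * X + m * Y := by nlinarith
        have : 0 < X * Y * (((N : ℝ) - 2) * X + m * Y) :=
          mul_pos (mul_pos hXpos hYpos) hin
        linarith
  · rintro (h | h | h | h | h) <;>
      (simp only [Prod.mk.injEq] at h; obtain ⟨hx, hy, hz⟩ := h; subst hx; subst hy; subst hz) <;>
      refine ⟨by ring, by ring, by ring⟩
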